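/- Let h:ℝ^p→ℝ be a polynomial with Hermite decomposition h(z) = Σ_{i=1}^m c_i·∏_{j=1}^p He_{α_i(j)}(z_j), where c_1,…,c_m are nonzero real coefficients, α_1,…,α_m ∈ ℕ^p are pairwise distinct multi-indices, and He_k denotes the k-th probabilists' Hermite polynomial. Let J ⊆ {1,…,p} be nonempty and let S = span{e_j : j ∈ J} (coordinate subspace). Then the following are equivalent: (a) E_{z_S∼N(0,I_S)}[h(z)·z_S] = 0 (an identity in S) for every fixed value of the coordinates z_j with j ∉ J; (b) for every i ∈ {1,…,m}, Σ_{j∈J} α_i(j) ≠ 1. -/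

import Mathlib

open MeasureTheory ProbabilityTheory
open Polynomial Real
open scoped ENNReal NNReal

noncomputable def QH (n : ℕ) : ℝ[X] := (hermite n).map (Int.castRingHom ℝ)

lemma QH_zero : QH 0 = 1 := by simp [QH, hermite_zero]
lemma QH_one : QH 1 = X := by simp [QH, hermite_one]
lemma QH_succ (n : ℕ) : QH (n+1) = X * QH n - derivative (QH n) := by
  simp [QH, hermite_succ, Polynomial.derivative_map]

lemma eval_QH (n : ℕ) (x : ℝ) : (QH n).eval x = aeval x (hermite n) := by
  rw [QH, eval_map, aeval_def]
  rfl

lemma derivative_QH (n : ℕ) : derivative (QH (n+1)) = C ((n:ℝ)+1) * QH n := by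
  induction n with
  | zero => simp [QH_one, QH_zero]
  | succ n ih =>
    rw [QH_succ (n+1), derivative_sub, derivative_mul, derivative_X, ih]
    rw [derivative_mul, derivative_C, QH_succ n]
    push_cast
    simp only [map_add, map_one, map_ofNat]
    ring

noncomputable def gw (x : ℝ) : ℝ := Real.exp (-(1/2) * x^2)

lemma hasDerivAt_gw (x : ℝ) : HasDerivAt gw (-x * gw x) x := by
  have h1 : HasDerivAt (fun x : ℝ => -(1/2) * x^2) (-x) x := by
    have := (hasDerivAt_pow 2 x).const_mul (-(1/2) : ℝ)
    refine this.congr_deriv ?_; push_cast; ring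
  have h2 := h1.exp
  rw [show -x * gw x = gw x * -x from mul_comm _ _]
  exact h2

lemma integrable_poly_mul_gw (P : ℝ[X]) : Integrable (fun x => P.eval x * gw x) := by
  induction P using Polynomial.induction_on' with
  | add p q hp hq => have := hp.add hq; simp only [eval_add, add_mul]; exact this
  | monomial n a =>
    have base : Integrable (fun x : ℝ => x ^ (n:ℝ) * Real.exp (-(1/2) * x^2)) :=
      integrable_rpow_mul_exp_neg_mul_sq (by norm_num)
        (lt_of_lt_of_le (by norm_num : (-1:ℝ) < 0) (Nat.cast_nonneg n))
    simp_rw [Real.rpow_natCast] at base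
    have := base.const_mul a
    refine this.congr (Filter.Eventually.of_forall fun x => ?_)
    simp only [eval_monomial, gw]
    ring

lemma pdf_eq (x : ℝ) :
    gaussianPDFReal 0 1 x = (Real.sqrt (2*Real.pi))⁻¹ * gw x := by
  simp only [gaussianPDFReal, gw]
  norm_num
  left
  ring_nf

lemma pdf_nonneg (x : ℝ) : 0 ≤ gaussianPDFReal 0 1 x := gaussianPDFReal_nonneg 0 1 x

lemma gauss_density :
    gaussianReal 0 1 = (volume : Measure ℝ).withDensity
      (fun x => ((gaussianPDFReal 0 1 x).toNNReal : ℝ≥0∞)) := by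
  rw [gaussianReal_of_var_ne_zero _ one_ne_zero]
  rfl

lemma integral_gaussianReal_eq (f : ℝ → ℝ) :
    ∫ x, f x ∂(gaussianReal 0 1) = ∫ x, gaussianPDFReal 0 1 x * f x := by
  rw [gauss_density, integral_withDensity_eq_integral_smul
    (measurable_gaussianPDFReal 0 1).real_toNNReal]
  congr 1; funext x
  simp [NNReal.smul_def, Real.coe_toNNReal _ (pdf_nonneg x)]

lemma integrable_gaussianReal_iff (f : ℝ → ℝ) :
    Integrable f (gaussianReal 0 1) ↔ Integrable (fun x => gaussianPDFReal 0 1 x * f x) := by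
  rw [gauss_density,
    integrable_withDensity_iff_integrable_smul (measurable_gaussianPDFReal 0 1).real_toNNReal]
  constructor <;> intro h <;> refine h.congr (Filter.Eventually.of_forall fun x => ?_) <;>
    simp [NNReal.smul_def, Real.coe_toNNReal _ (pdf_nonneg x)]

lemma integrable_poly_gaussianReal (P : ℝ[X]) :
    Integrable (fun x => P.eval x) (gaussianReal 0 1) := by
  rw [integrable_gaussianReal_iff]
  have := (integrable_poly_mul_gw P).const_mul ((Real.sqrt (2*Real.pi))⁻¹)
  refine this.congr (Filter.Eventually.of_forall fun x => ?_)
  show (Real.sqrt (2*Real.pi))⁻¹ * (P.eval x * gw x) = gaussianPDFReal 0 1 x * P.eval x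
  rw [pdf_eq]; ring

lemma stein_gw (P : ℝ[X]) : ∫ x, (derivative P - X * P).eval x * gw x = 0 := by
  refine integral_eq_zero_of_hasDerivAt_of_integrable
    (f := fun x => P.eval x * gw x) (fun x => ?_) (integrable_poly_mul_gw _)
    (integrable_poly_mul_gw P)
  have h := (P.hasDerivAt x).mul (hasDerivAt_gw x)
  refine HasDerivAt.congr_deriv (f := fun x => P.eval x * gw x) h ?_
  simp only [eval_sub, eval_mul, eval_X]
  ring

lemma stein_gaussianReal (P : ℝ[X]) :
    ∫ x, (derivative P - X * P).eval x ∂(gaussianReal 0 1) = 0 := by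
  rw [integral_gaussianReal_eq]
  have : ∀ x : ℝ, gaussianPDFReal 0 1 x * (derivative P - X * P).eval x
      = (Real.sqrt (2*Real.pi))⁻¹ * ((derivative P - X * P).eval x * gw x) := by
    intro x; rw [pdf_eq]; ring
  simp_rw [this, integral_const_mul, stein_gw, mul_zero]

lemma herm_mean (n : ℕ) :
    ∫ x, (QH n).eval x ∂(gaussianReal 0 1) = if n = 0 then 1 else 0 := by
  cases n with
  | zero => simp [QH_zero]
  | succ n =>
    have h : ∀ x : ℝ, (QH (n+1)).eval x = -((derivative (QH n) - X * QH n).eval x) := by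
      intro x; rw [QH_succ]; simp only [eval_sub, eval_mul, eval_neg]; ring
    simp_rw [h]
    rw [integral_neg, stein_gaussianReal, neg_zero]
    simp

lemma herm_orth (k l : ℕ) :
    ∫ x, (QH k).eval x * (QH l).eval x ∂(gaussianReal 0 1)
      = if k = l then (k.factorial : ℝ) else 0 := by
  induction k generalizing l with
  | zero =>
    simp only [QH_zero, eval_one, one_mul]
    rw [herm_mean]
    simp [eq_comm]
  | succ k ih =>
    have key : ∀ x : ℝ, (QH (k+1)).eval x * (QH l).eval x
        = -((derivative (QH k * QH l) - X * (QH k * QH l)).eval x)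
          + (QH k).eval x * (derivative (QH l)).eval x := by
      intro x
      rw [QH_succ]
      simp only [eval_sub, eval_mul, eval_neg, eval_add, derivative_mul]
      ring
    simp_rw [key]
    have h1 : Integrable (fun x => -eval x (derivative (QH k * QH l) - X * (QH k * QH l)))
        (gaussianReal 0 1) := (integrable_poly_gaussianReal _).neg
    have h2 : Integrable (fun x => eval x (QH k) * eval x (derivative (QH l)))
        (gaussianReal 0 1) := by
      have := integrable_poly_gaussianReal (QH k * derivative (QH l))
      simpa using this
    rw [integral_add h1 h2, integral_neg, stein_gaussianReal, neg_zero, zero_add]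
    cases l with
    | zero =>
      simp only [QH_zero, derivative_one, eval_zero, mul_zero, integral_zero]
      simp
    | succ l =>
      have h2 : ∀ x : ℝ, (QH k).eval x * (derivative (QH (l+1))).eval x
          = ((l:ℝ)+1) * ((QH k).eval x * (QH l).eval x) := by
        intro x; rw [derivative_QH]; simp only [eval_mul, eval_C]; ring
      simp_rw [h2, integral_const_mul, ih l]
      rcases eq_or_ne k l with rfl | hne
      · simp only [if_pos rfl, Nat.factorial_succ]
        push_cast
        ring
      · simp [hne, fun h => hne (Nat.succ_injective h)]

def RG : Type := ℝ
instance : MeasurableSpace RG := inferInstanceAs (MeasurableSpace ℝ)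
noncomputable instance : MeasureSpace RG := ⟨gaussianReal 0 1⟩
instance : IsProbabilityMeasure (volume : Measure RG) :=
  inferInstanceAs (IsProbabilityMeasure (gaussianReal 0 1))
instance : SigmaFinite (volume : Measure RG) :=
  inferInstanceAs (SigmaFinite (gaussianReal 0 1))

lemma pi_transfer {p : ℕ} (F : (Fin p → ℝ) → ℝ) :
    ∫ u : Fin p → ℝ, F u ∂(Measure.pi fun _ => gaussianReal 0 1)
      = ∫ u : Fin p → RG, F u := rfl

lemma integral_prod_gauss {p : ℕ} (f : Fin p → ℝ → ℝ) :
    ∫ u : Fin p → ℝ, ∏ j, f j (u j) ∂(Measure.pi fun _ => gaussianReal 0 1)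
      = ∏ j, ∫ x, f j x ∂(gaussianReal 0 1) := by
  rw [pi_transfer]
  exact MeasureTheory.integral_fintype_prod_eq_prod (𝕜 := ℝ)
    (E := fun _ => ℝ) (μ := fun _ => gaussianReal 0 1) (fun j => f j)

lemma integrable_prod_gauss {p : ℕ} (f : Fin p → ℝ → ℝ)
    (hf : ∀ j, Integrable (f j) (gaussianReal 0 1)) :
    Integrable (fun u : Fin p → ℝ => ∏ j, f j (u j))
      (Measure.pi fun _ => gaussianReal 0 1) :=
  MeasureTheory.Integrable.fintype_prod_dep (𝕜 := ℝ) (E := fun _ : Fin p => ℝ) (μ := fun _ => gaussianReal 0 1)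
    (f := fun j => f j) (fun j => hf j)

lemma swap_sum_integral {p m : ℕ} (d : Fin m → ℝ) (P : Fin m → Fin p → ℝ[X]) :
    ∫ u : Fin p → ℝ, (∑ i, d i * ∏ j, (P i j).eval (u j))
        ∂(Measure.pi fun _ => gaussianReal 0 1)
      = ∑ i, d i * ∏ j, ∫ x, (P i j).eval x ∂(gaussianReal 0 1) := by
  rw [integral_finset_sum]
  · refine Finset.sum_congr rfl fun i _ => ?_
    rw [integral_const_mul]
    exact congrArg (d i * ·) (integral_prod_gauss (fun j t => (P i j).eval t))
  · intro i _
    exact (integrable_prod_gauss _ (fun j => integrable_poly_gaussianReal (P i j))).const_mul _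

lemma herm_momentX (n : ℕ) :
    ∫ x, (QH n).eval x * x ∂(gaussianReal 0 1) = if n = 1 then 1 else 0 := by
  have := herm_orth n 1
  rw [QH_one] at this
  simp only [eval_X] at this
  rw [this]
  rcases eq_or_ne n 1 with rfl | h
  · simp
  · simp [h]

lemma integral_const_gauss (k : ℝ) : ∫ _ : ℝ, k ∂(gaussianReal 0 1) = k := by simp

lemma master1 {p m : ℕ} (c : Fin m → ℝ) (α : Fin m → Fin p → ℕ) (J : Finset (Fin p))
    (zbar : Fin p → ℝ) (j0 : Fin p) (hj0 : j0 ∈ J) :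
    ∫ u : Fin p → ℝ,
      ((∑ i, c i * ∏ j, Polynomial.aeval ((J.piecewise u zbar) j) (Polynomial.hermite (α i j)))
        * (J.piecewise u zbar) j0) ∂(Measure.pi fun _ => gaussianReal 0 1)
    = ∑ i, c i * ((if ∀ j ∈ J, α i j = (if j = j0 then 1 else 0) then 1 else 0)
        * ∏ j ∈ Jᶜ, (QH (α i j)).eval (zbar j)) := by
  classical
  set P : Fin m → Fin p → ℝ[X] := fun i j =>
    if j ∈ J then (QH (α i j) * (if j = j0 then X else 1))
    else C ((QH (α i j)).eval (zbar j)) with hP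
  have hpoint : ∀ u : Fin p → ℝ,
      ((∑ i, c i * ∏ j, Polynomial.aeval ((J.piecewise u zbar) j) (Polynomial.hermite (α i j)))
        * (J.piecewise u zbar) j0)
      = ∑ i, c i * ∏ j, (P i j).eval (u j) := by
    intro u
    rw [Finset.sum_mul]
    refine Finset.sum_congr rfl fun i _ => ?_
    have hfac : ∀ j, (P i j).eval (u j)
        = (Polynomial.aeval ((J.piecewise u zbar) j) (Polynomial.hermite (α i j)))
          * (if j = j0 then u j else 1) := by
      intro j
      by_cases hj : j ∈ J
      · rw [hP]
        simp only [if_pos hj, eval_mul, J.piecewise_eq_of_mem _ _ hj, ← eval_QH]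
        congr 1
        split <;> simp
      · have hne : j ≠ j0 := fun h => hj (h ▸ hj0)
        rw [hP]
        simp only [if_neg hj, if_neg hne, eval_C, J.piecewise_eq_of_notMem _ _ hj, ← eval_QH,
          mul_one]
    simp_rw [hfac]
    rw [Finset.prod_mul_distrib]
    have : (∏ j, if j = j0 then u j else 1) = u j0 := by
      rw [Finset.prod_ite_eq' Finset.univ j0 u]
      simp
    rw [this, J.piecewise_eq_of_mem _ _ hj0]
    ring
  simp_rw [hpoint]
  rw [swap_sum_integral]
  refine Finset.sum_congr rfl fun i _ => ?_
  congr 1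
  have hint : ∀ j, ∫ x, (P i j).eval x ∂(gaussianReal 0 1)
      = if j ∈ J then (if α i j = (if j = j0 then 1 else 0) then 1 else 0)
        else (QH (α i j)).eval (zbar j) := by
    intro j
    by_cases hj : j ∈ J
    · by_cases hjj : j = j0
      · subst hjj
        have h1 : P i j = QH (α i j) * X := by simp [hP, hj]
        rw [h1, if_pos hj, if_pos rfl]
        have h2 : ∀ x : ℝ, (QH (α i j) * X).eval x = (QH (α i j)).eval x * x := by simp
        simp_rw [h2, herm_momentX]
      · have h1 : P i j = QH (α i j) := by simp [hP, hj, hjj]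
        rw [h1, if_pos hj, if_neg hjj, herm_mean]
    · have h1 : P i j = C ((QH (α i j)).eval (zbar j)) := by simp [hP, hj]
      rw [h1, if_neg hj]
      simp only [eval_C]
      exact integral_const_gauss _
  simp_rw [hint]
  rw [← Finset.prod_mul_prod_compl J]
  congr 1
  · calc (∏ j ∈ J, if j ∈ J then (if α i j = (if j = j0 then 1 else 0) then (1:ℝ) else 0)
            else (QH (α i j)).eval (zbar j))
        = ∏ j ∈ J, (if α i j = (if j = j0 then 1 else 0) then (1:ℝ) else 0) :=
          Finset.prod_congr rfl fun j hj => if_pos hj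
      _ = if ∀ j ∈ J, α i j = (if j = j0 then 1 else 0) then 1 else 0 := by
          rw [Finset.prod_boole]
          by_cases h : ∀ j ∈ J, α i j = (if j = j0 then 1 else 0) <;> simp [h]
  · exact Finset.prod_congr rfl fun j hj => if_neg (Finset.mem_compl.mp hj)

lemma master2 {p m : ℕ} (d : Fin m → ℝ) (α : Fin m → Fin p → ℕ) (β : Fin p → ℕ)
    (K : Finset (Fin p)) :
    ∫ z : Fin p → ℝ,
      ((∑ i, d i * ∏ j ∈ K, (QH (α i j)).eval (z j)) * ∏ j ∈ K, (QH (β j)).eval (z j))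
        ∂(Measure.pi fun _ => gaussianReal 0 1)
    = ∑ i, d i * ∏ j ∈ K, (if α i j = β j then ((α i j).factorial : ℝ) else 0) := by
  classical
  set P : Fin m → Fin p → ℝ[X] := fun i j =>
    if j ∈ K then QH (α i j) * QH (β j) else 1 with hP
  have hpoint : ∀ z : Fin p → ℝ,
      ((∑ i, d i * ∏ j ∈ K, (QH (α i j)).eval (z j)) * ∏ j ∈ K, (QH (β j)).eval (z j))
      = ∑ i, d i * ∏ j, (P i j).eval (z j) := by
    intro z
    rw [Finset.sum_mul]
    refine Finset.sum_congr rfl fun i _ => ?_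
    have : (∏ j, (P i j).eval (z j))
        = (∏ j ∈ K, (QH (α i j)).eval (z j)) * ∏ j ∈ K, (QH (β j)).eval (z j) := by
      rw [← Finset.prod_mul_distrib, ← Finset.prod_mul_prod_compl K]
      have h1 : (∏ j ∈ Kᶜ, (P i j).eval (z j)) = 1 := by
        refine Finset.prod_eq_one fun j hj => ?_
        rw [hP]; simp [if_neg (Finset.mem_compl.mp hj)]
      rw [h1, mul_one]
      refine Finset.prod_congr rfl fun j hj => ?_
      rw [hP]; simp [if_pos hj]
    rw [this]; ring
  simp_rw [hpoint]
  rw [swap_sum_integral]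
  refine Finset.sum_congr rfl fun i _ => ?_
  congr 1
  have hint : ∀ j, ∫ x, (P i j).eval x ∂(gaussianReal 0 1)
      = if j ∈ K then (if α i j = β j then ((α i j).factorial : ℝ) else 0) else 1 := by
    intro j
    by_cases hj : j ∈ K
    · have h1 : P i j = QH (α i j) * QH (β j) := by simp [hP, hj]
      rw [h1, if_pos hj]
      have h2 : ∀ x : ℝ, (QH (α i j) * QH (β j)).eval x
          = (QH (α i j)).eval x * (QH (β j)).eval x := by simp
      simp_rw [h2, herm_orth]
    · have h1 : P i j = 1 := by simp [hP, hj]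
      rw [h1, if_neg hj]
      simp only [eval_one]
      exact integral_const_gauss 1
  simp_rw [hint]
  rw [← Finset.prod_mul_prod_compl K, Finset.prod_congr rfl (fun j hj => if_pos hj),
    Finset.prod_congr rfl (fun j (hj : j ∈ Kᶜ) => if_neg (Finset.mem_compl.mp hj)),
    Finset.prod_const_one, mul_one]

theorem stmt_17 (p m : ℕ) (c : Fin m → ℝ) (hc : ∀ i, c i ≠ 0)
    (α : Fin m → Fin p → ℕ) (hα : Function.Injective α)
    (J : Finset (Fin p)) (hJ : J.Nonempty) :
    (∀ zbar : Fin p → ℝ, ∀ j0 ∈ J,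
        ∫ u : Fin p → ℝ,
          ((∑ i, c i * ∏ j, Polynomial.aeval ((J.piecewise u zbar) j) (Polynomial.hermite (α i j)))
            * (J.piecewise u zbar) j0)
          ∂(Measure.pi fun _ => gaussianReal 0 1) = 0)
      ↔ (∀ i, (∑ j ∈ J, α i j) ≠ 1) := by
  constructor
  · intro h i1 hsum
    obtain ⟨j0, hj0, hα1, hrest⟩ : ∃ j0 ∈ J, α i1 j0 = 1 ∧ ∀ j ∈ J, j ≠ j0 → α i1 j = 0 := by
      have hex : ∃ j0 ∈ J, α i1 j0 ≠ 0 := by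
        by_contra hz
        push_neg at hz
        rw [Finset.sum_eq_zero hz] at hsum
        exact one_ne_zero hsum.symm
      obtain ⟨j0, hj0, hne⟩ := hex
      have hsplit := Finset.add_sum_erase J (α i1) hj0
      have h1 : α i1 j0 = 1 ∧ ∑ j ∈ J.erase j0, α i1 j = 0 := by omega
      refine ⟨j0, hj0, h1.1, fun j hj hne' => ?_⟩
      exact (Finset.sum_eq_zero_iff).mp h1.2 j (Finset.mem_erase.mpr ⟨hne', hj⟩)
    have hcond1 : ∀ j ∈ J, α i1 j = (if j = j0 then 1 else 0) := by
      intro j hj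
      by_cases hjj : j = j0
      · subst hjj; simp [hα1]
      · simp [hjj, hrest j hj hjj]
    set d : Fin m → ℝ :=
      fun i => c i * (if ∀ j ∈ J, α i j = (if j = j0 then 1 else 0) then 1 else 0) with hd
    have hzero : ∀ zbar : Fin p → ℝ,
        ∑ i, d i * ∏ j ∈ Jᶜ, (QH (α i j)).eval (zbar j) = 0 := by
      intro zbar
      have hz := h zbar j0 hj0
      rw [master1 c α J zbar j0 hj0] at hz
      rw [hd]
      simp only [mul_assoc]
      exact hz
    have hX : ∫ z : Fin p → ℝ,
        ((∑ i, d i * ∏ j ∈ Jᶜ, (QH (α i j)).eval (z j))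
          * ∏ j ∈ Jᶜ, (QH (α i1 j)).eval (z j))
        ∂(Measure.pi fun _ => gaussianReal 0 1) = 0 := by
      have hz : ∀ z : Fin p → ℝ,
          ((∑ i, d i * ∏ j ∈ Jᶜ, (QH (α i j)).eval (z j))
            * ∏ j ∈ Jᶜ, (QH (α i1 j)).eval (z j)) = 0 := fun z => by
        rw [hzero z, zero_mul]
      simp_rw [hz]
      exact integral_zero _ _
    rw [master2 d α (α i1) Jᶜ] at hX
    rw [Finset.sum_eq_single i1 ?side1 ?side2] at hX
    case side2 => exact fun habs => absurd (Finset.mem_univ i1) habs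
    case side1 =>
      intro i _ hne
      by_cases hcnd : ∀ j ∈ J, α i j = (if j = j0 then 1 else 0)
      · have hex : ∃ j ∈ Jᶜ, α i j ≠ α i1 j := by
          by_contra hall
          push_neg at hall
          refine hne (hα ?_)
          funext j
          by_cases hj : j ∈ J
          · rw [hcnd j hj, hcond1 j hj]
          · exact hall j (Finset.mem_compl.mpr hj)
        obtain ⟨j, hjc, hne'⟩ := hex
        rw [Finset.prod_eq_zero hjc
          (if_neg hne' : (if α i j = α i1 j then ((α i j).factorial : ℝ) else 0) = 0), mul_zero]
      · have hdz : d i = 0 := by simp [hd, hcnd]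
        rw [hdz, zero_mul]
    have hd1 : d i1 = c i1 := by
      rw [hd]
      simp only [if_pos hcond1, mul_one]
    rw [hd1] at hX
    have hprod : (∏ j ∈ Jᶜ, if α i1 j = α i1 j then ((α i1 j).factorial : ℝ) else 0) ≠ 0 := by
      simp only [if_pos rfl]
      exact Finset.prod_ne_zero_iff.mpr fun j _ => Nat.cast_ne_zero.mpr (Nat.factorial_ne_zero _)
    rcases mul_eq_zero.mp hX with h1 | h2
    · exact hc i1 h1
    · exact hprod h2
  · intro hb zbar j0 hj0
    rw [master1 c α J zbar j0 hj0]
    refine Finset.sum_eq_zero fun i _ => ?_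
    have hnc : ¬ (∀ j ∈ J, α i j = (if j = j0 then 1 else 0)) := by
      intro hcnd
      apply hb i
      calc ∑ j ∈ J, α i j = ∑ j ∈ J, (if j = j0 then 1 else 0) := Finset.sum_congr rfl hcnd
        _ = 1 := by simp [Finset.sum_ite_eq', hj0]
    rw [if_neg hnc, zero_mul, mul_zero]
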